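/- Let K ⊆ L be a field extension with [L : K] ≥ 4. Then the ring K + XL[X] is not condensed. -/

import Mathlib

/-- An integral domain is condensed if for every pair of nonzero ideals `I, J`,
the product `I*J` equals the set of products `{i*j : i ∈ I, j ∈ J}`. -/
def IsCondensed (D : Type*) [CommRing D] : Prop :=
  ∀ I J : Ideal D, I ≠ ⊥ → J ≠ ⊥ → ∀ x ∈ I * J, ∃ i ∈ I, ∃ j ∈ J, x = i * j

/-- The ring `A + X·B[X]`: polynomials over `B` whose constant coefficient lies
in the subring `A`. -/
def constSubring {B : Type*} [CommRing B] (A : Subring B) : Subring (Polynomial B) where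
  carrier := {f | f.coeff 0 ∈ A}
  zero_mem' := by simpa using zero_mem A
  one_mem' := by simpa using one_mem A
  add_mem' := by
    intro f g hf hg
    simpa using add_mem hf hg
  neg_mem' := by
    intro f hf
    simpa using A.neg_mem hf
  mul_mem' := by
    intro f g hf hg
    simpa [Polynomial.mul_coeff_zero] using mul_mem hf hg

open Polynomial

section

section
variable {K L : Type*} [Field K] [Field L] [Algebra K L]

lemma aux_one (α : L) (hα : α ∉ (algebraMap K L).range) :
    ∀ a b : K, algebraMap K L a + algebraMap K L b * α = 0 → a = 0 ∧ b = 0 := by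
  intro a b hab
  by_cases hb : b = 0
  · subst hb
    simp only [map_zero, zero_mul, add_zero] at hab
    exact ⟨by simpa using hab, rfl⟩
  · exfalso
    apply hα
    refine ⟨-a / b, ?_⟩
    have hb' : algebraMap K L b ≠ 0 := by simpa using hb
    rw [map_div₀, map_neg]
    field_simp
    linear_combination -hab

lemma aux_indep (α β : L) (hα : α ∉ (algebraMap K L).range)
    (hβ : β ∉ IntermediateField.adjoin K {α}) :
    LinearIndependent K ![1, α, β, α * β] := by
  set F := IntermediateField.adjoin K {α} with hF
  have hαF : α ∈ F := IntermediateField.mem_adjoin_simple_self K α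
  rw [Fintype.linearIndependent_iff]
  intro g hg
  have hg' : (algebraMap K L (g 0) + algebraMap K L (g 1) * α)
      + (algebraMap K L (g 2) + algebraMap K L (g 3) * α) * β = 0 := by
    simp only [Fin.sum_univ_four, Algebra.smul_def, Matrix.cons_val_zero,
      Matrix.cons_val_one, Matrix.head_cons, Matrix.cons_val_two, Matrix.tail_cons,
      Matrix.cons_val_three] at hg
    ring_nf
    ring_nf at hg
    linear_combination hg
  by_cases h23 : g 2 = 0 ∧ g 3 = 0
  · have hB : algebraMap K L (g 2) + algebraMap K L (g 3) * α = 0 := by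
      rw [h23.1, h23.2]; simp
    rw [hB, zero_mul, add_zero] at hg'
    have h01 := aux_one α hα _ _ hg'
    intro i
    fin_cases i
    · exact h01.1
    · exact h01.2
    · exact h23.1
    · exact h23.2
  · exfalso
    have hB : algebraMap K L (g 2) + algebraMap K L (g 3) * α ≠ 0 := fun hc =>
      h23 (aux_one α hα _ _ hc)
    apply hβ
    have hβ_eq : β = -(algebraMap K L (g 0) + algebraMap K L (g 1) * α)
        * (algebraMap K L (g 2) + algebraMap K L (g 3) * α)⁻¹ := by
      rw [← div_eq_mul_inv, eq_div_iff hB]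
      linear_combination hg'
    rw [hβ_eq]
    have hAF : algebraMap K L (g 0) + algebraMap K L (g 1) * α ∈ F :=
      F.add_mem (F.algebraMap_mem _) (F.mul_mem (F.algebraMap_mem _) hαF)
    have hBF : algebraMap K L (g 2) + algebraMap K L (g 3) * α ∈ F :=
      F.add_mem (F.algebraMap_mem _) (F.mul_mem (F.algebraMap_mem _) hαF)
    exact F.mul_mem (F.neg_mem hAF) (F.inv_mem hBF)

lemma aux_exists (h : 4 ≤ Module.rank K L) :
    ∃ α β : L, LinearIndependent K ![1, α, β, α * β] := by
  have hα : ∃ α : L, α ∉ (algebraMap K L).range := by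
    by_contra h'
    push_neg at h'
    have hsurj : Function.Surjective (Algebra.linearMap K L) := fun y => h' y
    have e : K ≃ₗ[K] L := LinearEquiv.ofBijective (Algebra.linearMap K L)
      ⟨(algebraMap K L).injective, hsurj⟩
    have hr := e.lift_rank_eq
    rw [Module.rank_self, Cardinal.lift_one, eq_comm, Cardinal.lift_eq_one] at hr
    rw [hr] at h
    norm_num at h
  obtain ⟨α, hα⟩ := hα
  by_cases hind : LinearIndependent K ![1, α, α ^ 2, α ^ 3]
  · refine ⟨α, α ^ 2, ?_⟩
    have h3 : ![1, α, α ^ 2, α * α ^ 2] = ![1, α, α ^ 2, α ^ 3] := by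
      funext i; fin_cases i <;> simp [pow_succ]; ring
    rw [h3]
    exact hind
  · rw [Fintype.not_linearIndependent_iff] at hind
    obtain ⟨g, hg, i, hgi⟩ := hind
    set p : K[X] := C (g 0) + C (g 1) * X + C (g 2) * X ^ 2 + C (g 3) * X ^ 3 with hp
    have hp0 : p ≠ 0 := by
      intro hz
      apply hgi
      fin_cases i
      · have := congrArg (fun q => Polynomial.coeff q 0) hz
        simpa [hp, coeff_C] using this
      · have := congrArg (fun q => Polynomial.coeff q 1) hz
        simpa [hp, coeff_C] using this
      · have := congrArg (fun q => Polynomial.coeff q 2) hz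
        simpa [hp, coeff_C, coeff_X_pow] using this
      · have := congrArg (fun q => Polynomial.coeff q 3) hz
        simpa [hp, coeff_C, coeff_X_pow] using this
    have hpe : aeval α p = 0 := by
      simp only [Fin.sum_univ_four, Algebra.smul_def, Matrix.cons_val_zero,
        Matrix.cons_val_one, Matrix.head_cons, Matrix.cons_val_two, Matrix.tail_cons,
        Matrix.cons_val_three] at hg
      simp only [hp, map_add, map_mul, map_pow, aeval_C, aeval_X]
      ring_nf
      ring_nf at hg
      linear_combination hg
    have hint : IsIntegral K α := IsAlgebraic.isIntegral ⟨p, hp0, hpe⟩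
    have hdeg : (minpoly K α).natDegree ≤ 3 := by
      have h1 := minpoly.degree_le_of_ne_zero K α hp0 hpe
      have h2 : p.degree ≤ 3 := by
        rw [hp]
        compute_degree
      have := le_trans h1 h2
      exact natDegree_le_iff_degree_le.mpr this
    haveI := IntermediateField.adjoin.finiteDimensional hint
    have hfr : Module.finrank K (IntermediateField.adjoin K {α}) ≤ 3 := by
      rw [IntermediateField.adjoin.finrank hint]; exact hdeg
    have hβ : ∃ β : L, β ∉ IntermediateField.adjoin K {α} := by
      by_contra h'
      push_neg at h'
      have e : (IntermediateField.adjoin K {α}) ≃ₗ[K] L :=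
        LinearEquiv.ofBijective (IntermediateField.adjoin K {α}).val.toLinearMap
          ⟨Subtype.val_injective, fun x => ⟨⟨x, h' x⟩, rfl⟩⟩
      rw [← e.rank_eq, ← Module.finrank_eq_rank] at h
      have : (4 : ℕ) ≤ Module.finrank K (IntermediateField.adjoin K {α}) := by
        exact_mod_cast h
      omega
    obtain ⟨β, hβ⟩ := hβ
    exact ⟨α, β, aux_indep α β hα hβ⟩

lemma aux_contra (α β : L) (hind : LinearIndependent K ![1, α, β, α * β]) (a b c d : K)
    (he : (algebraMap K L a + algebraMap K L b * α) *
      (algebraMap K L c + algebraMap K L d * β) = 1 + α * β) : False := by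
  rw [Fintype.linearIndependent_iff] at hind
  have hz := hind ![a * c - 1, b * c, a * d, b * d - 1] ?_
  · have h0 := hz 0
    have h2 := hz 2
    have h3 := hz 3
    simp only [Matrix.cons_val_zero, Matrix.cons_val_one, Matrix.head_cons,
      Matrix.cons_val_two, Matrix.tail_cons, Matrix.cons_val_three, sub_eq_zero] at h0 h2 h3
    have hd : d ≠ 0 := fun hdz => by rw [hdz, mul_zero] at h3; exact one_ne_zero h3.symm
    have ha : a = 0 := by
      rcases mul_eq_zero.mp h2 with ha | hd'
      · exact ha
      · exact absurd hd' hd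
    rw [ha, zero_mul] at h0
    exact one_ne_zero h0.symm
  · simp only [Fin.sum_univ_four, Algebra.smul_def, Matrix.cons_val_zero, Matrix.cons_val_one,
      Matrix.head_cons, Matrix.cons_val_two, Matrix.tail_cons, Matrix.cons_val_three,
      map_sub, map_mul, map_one]
    linear_combination he

end

theorem stmt18 (K L : Type*) [Field K] [Field L] [Algebra K L]
    (h : 4 ≤ Module.rank K L) :
    ¬ IsCondensed (constSubring (algebraMap K L).range) := by
  obtain ⟨α, β, hind⟩ := aux_exists h
  intro hcond
  set R := constSubring (algebraMap K L).range with hR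
  have hmemX : (X : L[X]) ∈ R := by
    show (X : L[X]).coeff 0 ∈ (algebraMap K L).range
    simp
  have hmemα : (C α * X : L[X]) ∈ R := by
    show (C α * X : L[X]).coeff 0 ∈ (algebraMap K L).range
    simp
  have hmemβ : (C β * X : L[X]) ∈ R := by
    show (C β * X : L[X]).coeff 0 ∈ (algebraMap K L).range
    simp
  set x1 : R := ⟨X, hmemX⟩ with hx1
  set xα : R := ⟨C α * X, hmemα⟩ with hxα
  set xβ : R := ⟨C β * X, hmemβ⟩ with hxβ
  set I : Ideal R := Ideal.span {x1, xα} with hI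
  set J : Ideal R := Ideal.span {x1, xβ} with hJ
  have hx1I : x1 ∈ I := Ideal.subset_span (Set.mem_insert _ _)
  have hxαI : xα ∈ I := Ideal.subset_span (Set.mem_insert_of_mem _ rfl)
  have hx1J : x1 ∈ J := Ideal.subset_span (Set.mem_insert _ _)
  have hxβJ : xβ ∈ J := Ideal.subset_span (Set.mem_insert_of_mem _ rfl)
  have hx1ne : x1 ≠ 0 := by
    intro hz
    exact X_ne_zero (congrArg Subtype.val hz)
  have hIne : I ≠ ⊥ := fun hz => hx1ne (by rwa [hz, Ideal.mem_bot] at hx1I)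
  have hJne : J ≠ ⊥ := fun hz => hx1ne (by rwa [hz, Ideal.mem_bot] at hx1J)
  have hxmem : x1 * x1 + xα * xβ ∈ I * J :=
    Ideal.add_mem _ (Ideal.mul_mem_mul hx1I hx1J) (Ideal.mul_mem_mul hxαI hxβJ)
  obtain ⟨i, hi, j, hj, hij⟩ := hcond I J hIne hJne _ hxmem
  rw [hI, Ideal.mem_span_pair] at hi
  rw [hJ, Ideal.mem_span_pair] at hj
  obtain ⟨a, b, hab⟩ := hi
  obtain ⟨c, d, hcd⟩ := hj
  have hpoly : (1 + C α * C β) * X ^ 2 =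
      (((a : L[X]) + (b : L[X]) * C α) * ((c : L[X]) + (d : L[X]) * C β)) * X ^ 2 := by
    have h1 := congrArg (Subtype.val : R → L[X]) hij
    rw [← hab, ← hcd] at h1
    have h2 : (X : L[X]) * X + (C α * X) * (C β * X) =
        ((a : L[X]) * X + (b : L[X]) * (C α * X)) * ((c : L[X]) * X + (d : L[X]) * (C β * X)) := by
      simpa using h1
    linear_combination h2
  have hc2 := congrArg (fun p => p.coeff 2) hpoly
  simp only [coeff_mul_X_pow'] at hc2
  norm_num at hc2
  obtain ⟨a₀, ha₀⟩ : (a : L[X]).coeff 0 ∈ (algebraMap K L).range := a.2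
  obtain ⟨b₀, hb₀⟩ : (b : L[X]).coeff 0 ∈ (algebraMap K L).range := b.2
  obtain ⟨c₀, hc₀⟩ : (c : L[X]).coeff 0 ∈ (algebraMap K L).range := c.2
  obtain ⟨d₀, hd₀⟩ : (d : L[X]).coeff 0 ∈ (algebraMap K L).range := d.2
  exact aux_contra α β hind a₀ b₀ c₀ d₀ (by rw [ha₀, hb₀, hc₀, hd₀]; exact hc2.symm)
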